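/- Let K be a separable complex Hilbert space and let W ⊆ L²(𝕋,H²_K) be a full-Hardy subspace with base J. Then the wandering subspace R = W ⊖ Ŝ(W) for Ŝ is reducing for the bilateral shift U, and its associated measurable range function is given by J_R(λ) = J(λ) for a.e. λ ∈ 𝕋, where J(λ) ⊆ K is regarded as the subspace of constant K-valued functions inside H²_K (equivalently, J_R(λ) = H²_{J(λ)} ⊖ S(H²_{J(λ)}) for a.e. λ). -/

import Mathlib

noncomputable section

open MeasureTheory Complex Submodule
open scoped InnerProductSpace ENNReal ComplexConjugate

set_option synthInstance.maxHeartbeats 1000000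
set_option maxHeartbeats 1600000

namespace ShiftPaper

instance : Fact ((0:ℝ) < 1) := ⟨one_pos⟩

/-- The circle, modelled as `ℝ/ℤ`. -/
abbrev 𝕋 : Type := UnitAddCircle

/-- The normalized Haar (Lebesgue) probability measure on the circle. -/
abbrev μT : Measure 𝕋 := AddCircle.haarAddCircle

/-- The space `L²(𝕋, E)` of square-integrable `E`-valued functions on the circle. -/
abbrev L2 (E : Type*) [NormedAddCommGroup E] := Lp E 2 μT

lemma norm_fourier (n : ℤ) (t : 𝕋) : ‖fourier n t‖ = 1 := by
  rw [fourier_apply, Circle.norm_coe]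

section mulF

variable {E : Type*} [NormedAddCommGroup E] [NormedSpace ℂ E]

lemma memLp_mulF (n : ℤ) (f : L2 E) :
    MemLp (fun t => fourier n t • (f : 𝕋 → E) t) 2 μT := by
  refine MemLp.of_le (Lp.memLp f)
    (((fourier n).continuous.aestronglyMeasurable).smul (Lp.aestronglyMeasurable f)) ?_
  refine Filter.Eventually.of_forall fun t => ?_
  rw [norm_smul, norm_fourier, one_mul]

/-- Multiplication by `fourier n` (i.e. by `λ ↦ λⁿ`) as a bounded operator on `L²(𝕋, E)`.
For `n = 1` this is the bilateral shift `U`; for general `n : ℤ` it is `Uⁿ`. -/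
def mulF (n : ℤ) : L2 E →L[ℂ] L2 E :=
  LinearMap.mkContinuous
    { toFun := fun f => (memLp_mulF n f).toLp _
      map_add' := fun f g => by
        rw [← MemLp.toLp_add (memLp_mulF n f) (memLp_mulF n g)]
        refine MemLp.toLp_congr _ _ ?_
        filter_upwards [Lp.coeFn_add f g] with t ht
        simp only [ht, Pi.add_apply, smul_add]
      map_smul' := fun c f => by
        simp only [RingHom.id_apply]
        rw [← MemLp.toLp_const_smul c (memLp_mulF n f)]
        refine MemLp.toLp_congr _ _ ?_
        filter_upwards [Lp.coeFn_smul c f] with t ht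
        rw [ht]
        simp only [Pi.smul_apply]
        rw [smul_comm] }
    1
    (fun f => by
      simp only [LinearMap.coe_mk, AddHom.coe_mk, one_mul]
      rw [Lp.norm_toLp _ (memLp_mulF n f), Lp.norm_def]
      refine le_of_eq (congrArg ENNReal.toReal ?_)
      refine eLpNorm_congr_norm_ae ?_
      refine Filter.Eventually.of_forall fun t => ?_
      rw [norm_smul, norm_fourier, one_mul])

lemma coeFn_mulF (n : ℤ) (f : L2 E) :
    (mulF n f : 𝕋 → E) =ᵐ[μT] fun t => fourier n t • (f : 𝕋 → E) t :=
  MemLp.coeFn_toLp (memLp_mulF n f)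

end mulF

section HardySpace

variable (K : Type) [NormedAddCommGroup K] [InnerProductSpace ℂ K] [CompleteSpace K]

/-- The continuous function `t ↦ fourier n t • x`. -/
def fourierSmulCM (n : ℤ) (x : K) : C(𝕋, K) :=
  ⟨fun t => fourier n t • x, (fourier n).continuous.smul continuous_const⟩

/-- The element of `L²(𝕋, K)` given by `t ↦ fourier n t • x`. -/
def expVec (n : ℤ) (x : K) : L2 K := ContinuousMap.toLp 2 μT ℂ (fourierSmulCM K n x)

lemma coeFn_expVec (n : ℤ) (x : K) :
    (expVec K n x : 𝕋 → K) =ᵐ[μT] fun t => fourier n t • x :=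
  ContinuousMap.coeFn_toLp (𝕜 := ℂ) μT (fourierSmulCM K n x)

/-- The Hardy space `H²(𝕋, K)`, as the subspace of `L²(𝕋, K)` of functions all of whose
weak Fourier coefficients of negative index vanish (equivalently, all of whose coordinate
functions with respect to an orthonormal basis of `K` lie in the scalar Hardy space `H²`). -/
def Hardy : Submodule ℂ (L2 K) :=
  ⨅ (n : ℤ) (_ : n < 0) (x : K), LinearMap.ker (innerSL ℂ (expVec K n x) : L2 K →ₗ[ℂ] ℂ)

lemma isClosed_Hardy : IsClosed ((Hardy K : Set (L2 K))) := by
  have h : (Hardy K : Set (L2 K)) = ⋂ (n : ℤ) (_ : n < 0) (x : K),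
      ((LinearMap.ker (innerSL ℂ (expVec K n x) : L2 K →ₗ[ℂ] ℂ) : Submodule ℂ (L2 K)) : Set (L2 K)) := by
    simp only [Hardy, Submodule.coe_iInf]
  rw [h]
  exact isClosed_iInter fun n => isClosed_iInter fun _ => isClosed_iInter fun x =>
    (ContinuousLinearMap.isClosed_ker _)

/-- The Hardy space `H²(𝕋, K)` as a Hilbert space in its own right. -/
abbrev H2 := ↥(Hardy K)

instance : CompleteSpace (H2 K) := (isClosed_Hardy K).completeSpace_coe

end HardySpace


section Shift

variable (K : Type) [NormedAddCommGroup K] [InnerProductSpace ℂ K] [CompleteSpace K]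

lemma inner_expVec_mulF (n : ℤ) (x : K) (f : L2 K) :
    (inner ℂ (expVec K n x) (mulF 1 f) : ℂ) = inner ℂ (expVec K (n - 1) x) f := by
  rw [MeasureTheory.L2.inner_def, MeasureTheory.L2.inner_def]
  refine integral_congr_ae ?_
  filter_upwards [coeFn_mulF 1 f, coeFn_expVec K n x, coeFn_expVec K (n-1) x] with t h1 h2 h3
  rw [h1, h2, h3, inner_smul_left, inner_smul_left, inner_smul_right,
    ← fourier_neg, ← fourier_neg, ← mul_assoc, ← fourier_add]
  have h : -n + 1 = -(n - 1) := by ring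
  rw [h]

lemma mulF_mem_hardy {f : L2 K} (hf : f ∈ Hardy K) : mulF 1 f ∈ Hardy K := by
  simp only [Hardy, Submodule.mem_iInf, LinearMap.mem_ker, ContinuousLinearMap.coe_coe, innerSL_apply_apply] at hf ⊢
  intro n hn x
  rw [inner_expVec_mulF]
  exact hf (n - 1) (by omega) x

/-- The unilateral shift `S` on the Hardy space `H²(𝕋, K)`: the restriction of the
bilateral shift (multiplication by the variable) to the Hardy space. -/
def S : H2 K →L[ℂ] H2 K where
  toLinearMap := (mulF (E := K) 1).toLinearMap.restrict
    (p := Hardy K) (q := Hardy K) (fun _ hx => mulF_mem_hardy K hx)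
  cont := by
    apply Continuous.subtype_mk
    exact (mulF (E := K) 1).continuous.comp continuous_subtype_val

/-- The operator `Ŝ` on `L²(𝕋, H²(𝕋,K))`, acting pointwisely (on the values) as the
unilateral shift `S`. -/
def Shat : L2 (H2 K) →L[ℂ] L2 (H2 K) := (S K).compLpL 2 μT

lemma integral_fourier_eq_zero {m : ℤ} (hm : m ≠ 0) :
    ∫ t : 𝕋, fourier m t ∂μT = 0 := by
  have h0 : ((0:ℤ)) ≠ m := fun h => hm h.symm
  have h : (inner ℂ (fourierLp (T := 1) 2 (0:ℤ)) (fourierLp 2 m) : ℂ) = 0 :=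
    orthonormal_fourier.2 h0
  rw [MeasureTheory.L2.inner_def] at h
  rw [← h]
  refine integral_congr_ae ?_
  filter_upwards [coeFn_fourierLp 2 (0:ℤ), coeFn_fourierLp 2 m] with t h1 h2
  rw [h1, h2]
  simp [fourier_zero]

lemma const_mem_hardy (x : K) : expVec K 0 x ∈ Hardy K := by
  simp only [Hardy, Submodule.mem_iInf, LinearMap.mem_ker, ContinuousLinearMap.coe_coe, innerSL_apply_apply]
  intro n hn y
  rw [MeasureTheory.L2.inner_def]
  have h : ∀ᵐ t ∂μT, (inner ℂ ((expVec K n y : 𝕋 → K) t) ((expVec K 0 x : 𝕋 → K) t) : ℂ)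
      = fourier (-n) t * (inner ℂ y x : ℂ) := by
    filter_upwards [coeFn_expVec K n y, coeFn_expVec K 0 x] with t h1 h2
    rw [h1, h2, inner_smul_left, inner_smul_right, ← fourier_neg, fourier_zero, one_mul]
  rw [integral_congr_ae h, integral_mul_const,
    integral_fourier_eq_zero (by omega), zero_mul]

/-- The linear embedding of `K` into `H²(𝕋,K)` as constant functions. -/
def constL : K →ₗ[ℂ] H2 K where
  toFun x := ⟨expVec K 0 x, const_mem_hardy K x⟩
  map_add' x y := by
    apply Subtype.ext
    simp only [Submodule.coe_add]
    unfold expVec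
    rw [← map_add]
    congr 1
    ext t
    simp [fourierSmulCM, smul_add]
  map_smul' c x := by
    apply Subtype.ext
    simp only [RingHom.id_apply, SetLike.val_smul]
    unfold expVec
    rw [← _root_.map_smul]
    congr 1
    ext t
    simp [fourierSmulCM]

end Shift


section RangeFunctions

variable {F : Type*} [NormedAddCommGroup F] [InnerProductSpace ℂ F] [CompleteSpace F]

/-- The orthogonal projection onto a closed subspace, as a plain function (defined to be `0`
if the subspace is not closed). -/
def projTo (N : Submodule ℂ F) (x : F) : F :=
  letI := Classical.dec (IsClosed ((N : Set F)))
  if h : IsClosed ((N : Set F)) then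
    haveI : CompleteSpace N := h.completeSpace_coe
    (orthogonalProjection N x : F)
  else 0

/-- A measurable range function in `F`: a map `J` from `𝕋` to closed subspaces of `F` such
that `t ↦ ⟪P_{J(t)} x, y⟫` is measurable for every `x, y ∈ F`. -/
def IsMeasRange (J : 𝕋 → Submodule ℂ F) : Prop :=
  (∀ t, IsClosed ((J t : Set F))) ∧
  ∀ x y : F, Measurable fun t => (inner ℂ (projTo (J t) x) y : ℂ)

/-- The set of `f ∈ L²(𝕋, E)` such that `f(t) ∈ J(t)` for a.e. `t ∈ 𝕋`. -/
def rangeSet {E : Type*} [NormedAddCommGroup E] [NormedSpace ℂ E]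
    (J : 𝕋 → Submodule ℂ E) : Set (L2 E) :=
  {f | ∀ᵐ t ∂μT, (f : 𝕋 → E) t ∈ J t}

end RangeFunctions

section OperatorNotions

variable {E : Type*} [NormedAddCommGroup E] [NormedSpace ℂ E]

/-- A subspace `M` is invariant under the bounded operator `A` if `A(M) ⊆ M`. -/
def InvariantUnder (A : E →L[ℂ] E) (M : Submodule ℂ E) : Prop :=
  ∀ f ∈ M, A f ∈ M

/-- Two bounded operators commute. -/
def CommutesWith (A B : E →L[ℂ] E) : Prop := ∀ f, A (B f) = B (A f)

variable {F : Type*} [NormedAddCommGroup F] [InnerProductSpace ℂ F]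

/-- A subspace `M` is reducing for `A` if both `M` and `M^⊥` are invariant under `A`. -/
def Reducing (A : F →L[ℂ] F) (M : Submodule ℂ F) : Prop :=
  InvariantUnder A M ∧ InvariantUnder A Mᗮ

/-- `Φ` is a partial isometry with initial space `W`: it is isometric on `W` and vanishes
on `W^⊥`. -/
def IsPartialIsometryOn (Φ : F →L[ℂ] F) (W : Submodule ℂ F) : Prop :=
  (∀ f ∈ W, ‖Φ f‖ = ‖f‖) ∧ ∀ f ∈ Wᗮ, Φ f = 0

end OperatorNotions

section FullHardy

variable (K : Type) [NormedAddCommGroup K] [InnerProductSpace ℂ K] [CompleteSpace K]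

/-- For a subspace `N ⊆ K`, the subspace `H²_N` of `H²_K`: those elements of the Hardy space
taking values in `N` almost everywhere. -/
def hardyIn (N : Submodule ℂ K) : Submodule ℂ (H2 K) where
  carrier := {g | ∀ᵐ z ∂μT, ((g : L2 K) : 𝕋 → K) z ∈ N}
  zero_mem' := by
    have h0 : ((0 : H2 K) : L2 K) = 0 := rfl
    rw [Set.mem_setOf_eq, h0]
    filter_upwards [Lp.coeFn_zero K 2 μT] with z hz
    rw [hz]
    exact N.zero_mem
  add_mem' := by
    intro a b ha hb
    have h0 : ((a + b : H2 K) : L2 K) = (a : L2 K) + (b : L2 K) := rfl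
    rw [Set.mem_setOf_eq, h0]
    filter_upwards [ha, hb, Lp.coeFn_add (a : L2 K) (b : L2 K)] with z ha' hb' hadd
    rw [hadd]
    exact N.add_mem ha' hb'
  smul_mem' := by
    intro c a ha
    have h0 : ((c • a : H2 K) : L2 K) = c • (a : L2 K) := rfl
    rw [Set.mem_setOf_eq, h0]
    filter_upwards [ha, Lp.coeFn_smul c (a : L2 K)] with z ha' hsmul
    rw [hsmul]
    exact N.smul_mem c ha'

/-- The set of `f ∈ L²(𝕋, H²_K)` with `f(t) ∈ H²_{J(t)}` for a.e. `t`. If `J` is a measurable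
range function in `K`, this is the full-Hardy subspace with base `J`. -/
def fullHardySet (J : 𝕋 → Submodule ℂ K) : Set (L2 (H2 K)) :=
  {f | ∀ᵐ t ∂μT, (f : 𝕋 → H2 K) t ∈ hardyIn K (J t)}

/-- A subspace `W ⊆ L²(𝕋, H²_K)` is full-Hardy if it is of the form
`{f : f(t) ∈ H²_{J(t)} a.e.}` for some measurable range function `J` in `K`. -/
def IsFullHardy (W : Submodule ℂ (L2 (H2 K))) : Prop :=
  ∃ J : 𝕋 → Submodule ℂ K, IsMeasRange J ∧ (W : Set (L2 (H2 K))) = fullHardySet K J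

end FullHardy

section Dimension

open scoped Classical in
/-- The Hilbert-space dimension of a subspace, as an element of `ℕ∞` (in a separable ambient
space this is the cardinality of any orthonormal basis). -/
def dimSub {F : Type*} [NormedAddCommGroup F] [InnerProductSpace ℂ F]
    (N : Submodule ℂ F) : ℕ∞ :=
  if FiniteDimensional ℂ ↥N then (Module.finrank ℂ ↥N : ℕ∞) else ⊤

end Dimension

section ScalarCase

/-- Evaluation of an element of the scalar Hardy space (via its chosen representative). -/
def ev (g : H2 ℂ) (z : 𝕋) : ℂ := ((g : L2 ℂ) : 𝕋 → ℂ) z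

/-- Iterated evaluation of an element of `L²(𝕋, H²)`. -/
def ev2 (f : L2 (H2 ℂ)) (t z : 𝕋) : ℂ := ev ((f : 𝕋 → H2 ℂ) t) z

/-- A function `h ∈ H²` is inner if `|h(z)| = 1` for a.e. `z ∈ 𝕋`. -/
def IsInnerFn (g : H2 ℂ) : Prop := ∀ᵐ z ∂μT, ‖ev g z‖ = 1

lemma ev_zero : ∀ᵐ z ∂μT, ev (0 : H2 ℂ) z = 0 := by
  have h0 : ((0 : H2 ℂ) : L2 ℂ) = 0 := rfl
  unfold ev
  rw [h0]
  filter_upwards [Lp.coeFn_zero ℂ 2 μT] with z hz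
  rw [hz]
  rfl

lemma ev_add (u v : H2 ℂ) : ∀ᵐ z ∂μT, ev (u + v) z = ev u z + ev v z := by
  have h0 : ((u + v : H2 ℂ) : L2 ℂ) = (u : L2 ℂ) + (v : L2 ℂ) := rfl
  unfold ev
  rw [h0]
  filter_upwards [Lp.coeFn_add (u : L2 ℂ) (v : L2 ℂ)] with z hz
  rw [hz]
  rfl

lemma ev_smul (c : ℂ) (u : H2 ℂ) : ∀ᵐ z ∂μT, ev (c • u) z = c * ev u z := by
  have h0 : ((c • u : H2 ℂ) : L2 ℂ) = c • (u : L2 ℂ) := rfl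
  unfold ev
  rw [h0]
  filter_upwards [Lp.coeFn_smul c (u : L2 ℂ)] with z hz
  rw [hz]
  rfl

/-- For `w ∈ H²`, the subspace `w·H² = {w·k : k ∈ H²}` of `H²` (membership described via
a.e. pointwise multiplication of representatives). -/
def mulSet (w : H2 ℂ) : Submodule ℂ (H2 ℂ) where
  carrier := {u | ∃ k : H2 ℂ, ∀ᵐ z ∂μT, ev u z = ev w z * ev k z}
  zero_mem' := by
    refine ⟨0, ?_⟩
    filter_upwards [ev_zero] with z hz
    rw [hz, mul_zero]
  add_mem' := by
    rintro u v ⟨k₁, h₁⟩ ⟨k₂, h₂⟩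
    refine ⟨k₁ + k₂, ?_⟩
    filter_upwards [h₁, h₂, ev_add u v, ev_add k₁ k₂] with z e1 e2 e3 e4
    rw [e3, e1, e2, e4, mul_add]
  smul_mem' := by
    rintro c u ⟨k, h⟩
    refine ⟨c • k, ?_⟩
    filter_upwards [h, ev_smul c u, ev_smul c k] with z e1 e2 e3
    rw [e2, e1, e3]
    ring

/-- The set `φ·L²(𝕋, H²) = {φ g : g ∈ L²(𝕋,H²)}`, where `(φ g)(t)(z) = φ(t)(z)·g(t)(z)`. -/
def timesSet (φ : L2 (H2 ℂ)) : Set (L2 (H2 ℂ)) :=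
  {h | ∃ g : L2 (H2 ℂ), ∀ᵐ t ∂μT, ∀ᵐ z ∂μT, ev2 h t z = ev2 φ t z * ev2 g t z}

end ScalarCase

section Aux

set_option linter.unusedSectionVars false

open Filter

variable (K : Type) [NormedAddCommGroup K] [InnerProductSpace ℂ K] [CompleteSpace K]

lemma inner_expVec (n : ℤ) (x : K) (u : L2 K) :
    (inner ℂ (expVec K n x) u : ℂ)
      = ∫ t, (starRingEnd ℂ) (fourier n t) * (inner ℂ x ((u : 𝕋 → K) t) : ℂ) ∂μT := by
  rw [MeasureTheory.L2.inner_def]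
  refine integral_congr_ae ?_
  filter_upwards [coeFn_expVec K n x] with t h
  rw [h, inner_smul_left]

lemma norm_expVec (n : ℤ) (x : K) : ‖expVec K n x‖ = ‖x‖ := by
  rw [Lp.norm_def]
  have h1 : eLpNorm (expVec K n x : 𝕋 → K) 2 μT = eLpNorm (fun _ : 𝕋 => x) 2 μT := by
    refine eLpNorm_congr_norm_ae ?_
    filter_upwards [coeFn_expVec K n x] with t h
    rw [h, norm_smul, norm_fourier, one_mul]
  rw [h1, eLpNorm_const x (by norm_num) (NeZero.ne μT)]
  simp [measure_univ]

lemma expVec_add (n : ℤ) (x y : K) :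
    expVec K n (x + y) = expVec K n x + expVec K n y := by
  unfold expVec
  rw [← map_add]
  congr 1
  ext t
  simp [fourierSmulCM, smul_add]

lemma expVec_sub (n : ℤ) (x y : K) :
    expVec K n (x - y) = expVec K n x - expVec K n y := by
  unfold expVec
  rw [← map_sub]
  congr 1
  ext t
  simp [fourierSmulCM, smul_sub]

lemma isometry_expVec (n : ℤ) : Isometry (fun x : K => expVec K n x) :=
  Isometry.of_dist_eq fun x y => by
    rw [dist_eq_norm, dist_eq_norm, ← expVec_sub, norm_expVec]

lemma continuous_expVec (n : ℤ) : Continuous (fun x : K => expVec K n x) :=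
  (isometry_expVec K n).continuous

lemma inner_expVec_expVec (m n : ℤ) (x y : K) :
    (inner ℂ (expVec K m x) (expVec K n y) : ℂ)
      = if m = n then (inner ℂ x y : ℂ) else 0 := by
  rw [inner_expVec]
  have h : ∀ᵐ t ∂μT, (starRingEnd ℂ) (fourier m t) * (inner ℂ x ((expVec K n y : 𝕋 → K) t) : ℂ)
      = fourier (n - m) t * (inner ℂ x y : ℂ) := by
    filter_upwards [coeFn_expVec K n y] with t h
    rw [h, inner_smul_right, ← fourier_neg, ← mul_assoc, ← fourier_add, neg_add_eq_sub]
  rw [integral_congr_ae h, integral_mul_const]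
  by_cases hmn : m = n
  · subst hmn
    rw [if_pos rfl, sub_self]
    have : ∀ t : 𝕋, fourier (0 : ℤ) t = (1 : ℂ) := fun t => fourier_zero
    simp only [this, integral_const, measure_univ, probReal_univ, ENNReal.toReal_one, smul_eq_mul,
      one_mul, mul_one, one_smul]
  · rw [if_neg hmn, integral_fourier_eq_zero (sub_ne_zero.2 (Ne.symm hmn)), zero_mul]

lemma expVec_mem_hardy (n : ℤ) (hn : 0 ≤ n) (x : K) : expVec K n x ∈ Hardy K := by
  simp only [Hardy, Submodule.mem_iInf, LinearMap.mem_ker, ContinuousLinearMap.coe_coe, innerSL_apply_apply]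
  intro m hm y
  rw [inner_expVec_expVec, if_neg (by omega)]

lemma mulF_expVec (n : ℤ) (x : K) : mulF 1 (expVec K n x) = expVec K (n + 1) x := by
  apply Lp.ext
  filter_upwards [coeFn_mulF 1 (expVec K n x), coeFn_expVec K n x,
    coeFn_expVec K (n + 1) x] with t h1 h2 h3
  rw [h1, h2, h3, smul_smul, ← fourier_add, add_comm]

lemma eq_zero_of_inner_expVec [SecondCountableTopology K] (u : L2 K)
    (h : ∀ (n : ℤ) (x : K), (inner ℂ (expVec K n x) u : ℂ) = 0) : u = 0 := by
  have key : ∀ x : K, ∀ᵐ t ∂μT, (inner ℂ x ((u : 𝕋 → K) t) : ℂ) = 0 := by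
    intro x
    have hmem : MemLp (fun t => (inner ℂ x ((u : 𝕋 → K) t) : ℂ)) 2 μT := by
      refine MemLp.of_le ((Lp.memLp u).const_smul ‖x‖) ?_ ?_
      · exact AEStronglyMeasurable.inner aestronglyMeasurable_const
          (Lp.aestronglyMeasurable u)
      · refine Filter.Eventually.of_forall fun t => ?_
        simp only [Pi.smul_apply]
        rw [norm_smul, norm_norm]
        exact norm_inner_le_norm _ _
    set ψ : Lp ℂ 2 μT := hmem.toLp _ with hψdef
    have hco : ∀ n : ℤ, (inner ℂ ((fourierBasis (T := 1)) n) ψ : ℂ) = 0 := by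
      intro n
      have hb : ((fourierBasis (T := 1)) n : Lp ℂ 2 μT) = fourierLp 2 n := by
        rw [coe_fourierBasis]
      rw [hb]
      have : (inner ℂ (fourierLp 2 n : Lp ℂ 2 μT) ψ : ℂ) = (inner ℂ (expVec K n x) u : ℂ) := by
        rw [MeasureTheory.L2.inner_def, inner_expVec]
        refine integral_congr_ae ?_
        filter_upwards [hmem.coeFn_toLp, coeFn_fourierLp 2 n] with t h1 h2
        rw [h1, h2, RCLike.inner_apply, mul_comm]
      rw [this, h n x]
    have hψ : ψ = 0 := by
      have hr : (fourierBasis (T := 1)).repr ψ = 0 := by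
        apply lp.ext
        funext n
        rw [HilbertBasis.repr_apply_apply, hco n]
        rfl
      exact ((fourierBasis (T := 1)).repr.map_eq_zero_iff).1 hr
    have h1 := hmem.coeFn_toLp
    rw [← hψdef, hψ] at h1
    filter_upwards [h1.symm, Lp.coeFn_zero ℂ 2 μT] with t e1 e2
    rw [e1, e2]
    rfl
  have hae : ∀ᵐ t ∂μT, ∀ k : ℕ,
      (inner ℂ (TopologicalSpace.denseSeq K k) ((u : 𝕋 → K) t) : ℂ) = 0 :=
    ae_all_iff.2 fun k => key _
  rw [Lp.eq_zero_iff_ae_eq_zero]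
  filter_upwards [hae] with t ht
  have hfun : (fun x : K => (inner ℂ x ((u : 𝕋 → K) t) : ℂ)) = fun _ => 0 := by
    refine DenseRange.equalizer (TopologicalSpace.denseRange_denseSeq K)
      ?_ continuous_const (funext fun k => ht k)
    exact continuous_id.inner continuous_const
  have := congrFun hfun ((u : 𝕋 → K) t)
  simpa [inner_self_eq_zero] using this

end Aux


section Aux2

set_option linter.unusedSectionVars false

open Filter

variable (K : Type) [NormedAddCommGroup K] [InnerProductSpace ℂ K] [CompleteSpace K]

/-- The `0`-th Fourier coefficient of an `L²` function. -/
def coeff0 (u : L2 K) : K := ∫ t, (u : 𝕋 → K) t ∂μT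

lemma integrable_coeFn (u : L2 K) : Integrable (fun t => (u : 𝕋 → K) t) μT :=
  (Lp.memLp u).integrable one_le_two

lemma inner_expVec_zero (x : K) (u : L2 K) :
    (inner ℂ (expVec K 0 x) u : ℂ) = inner ℂ x (coeff0 K u) := by
  rw [inner_expVec, coeff0, ← integral_inner (integrable_coeFn K u) x]
  refine integral_congr_ae (Filter.Eventually.of_forall fun t => ?_)
  simp only [fourier_zero, map_one, one_mul]

lemma inner_coeff0 (y : K) (u : L2 K) :
    (inner ℂ y (coeff0 K u) : ℂ) = ∫ t, (inner ℂ y ((u : 𝕋 → K) t) : ℂ) ∂μT :=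
  (integral_inner (integrable_coeFn K u) y).symm

lemma inner_expVec_eq_zero_of_orth {N : Submodule ℂ K} {y : K} (hy : y ∈ Nᗮ)
    (n : ℤ) {u : L2 K} (hu : ∀ᵐ t ∂μT, (u : 𝕋 → K) t ∈ N) :
    (inner ℂ (expVec K n y) u : ℂ) = 0 := by
  rw [inner_expVec]
  rw [← integral_zero 𝕋 ℂ (μ := μT)]
  refine integral_congr_ae ?_
  filter_upwards [hu] with t ht
  rw [(Submodule.mem_orthogonal' N y).1 hy _ ht, mul_zero]

lemma coeff0_mem {N : Submodule ℂ K} (hN : IsClosed (N : Set K)) {u : L2 K}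
    (hu : ∀ᵐ t ∂μT, (u : 𝕋 → K) t ∈ N) : coeff0 K u ∈ N := by
  haveI : CompleteSpace N := hN.completeSpace_coe
  rw [← Submodule.orthogonal_orthogonal N]
  intro y hy
  rw [inner_coeff0, ← integral_zero 𝕋 ℂ (μ := μT)]
  refine integral_congr_ae ?_
  filter_upwards [hu] with t ht
  exact (Submodule.mem_orthogonal' N y).1 hy _ ht

end Aux2

section ProjTo

set_option linter.unusedSectionVars false

variable {F : Type*} [NormedAddCommGroup F] [InnerProductSpace ℂ F] [CompleteSpace F]

lemma projTo_of_isClosed {N : Submodule ℂ F} (hN : IsClosed ((N : Set F))) (x : F) :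
    haveI : CompleteSpace N := hN.completeSpace_coe
    projTo N x = (orthogonalProjection N x : F) := by
  simp only [projTo]
  rw [dif_pos hN]

lemma projTo_mem (N : Submodule ℂ F) (x : F) : projTo N x ∈ N := by
  by_cases hN : IsClosed ((N : Set F))
  · haveI : CompleteSpace N := hN.completeSpace_coe
    rw [projTo_of_isClosed hN]
    exact (orthogonalProjection N x).2
  · simp only [projTo]
    rw [dif_neg hN]
    exact N.zero_mem

lemma projTo_eq_self {N : Submodule ℂ F} (hN : IsClosed ((N : Set F))) {x : F}
    (hx : x ∈ N) : projTo N x = x := by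
  haveI : CompleteSpace N := hN.completeSpace_coe
  rw [projTo_of_isClosed hN]
  exact starProjection_eq_self_iff.2 hx

lemma norm_projTo_le (N : Submodule ℂ F) (x : F) : ‖projTo N x‖ ≤ ‖x‖ := by
  by_cases hN : IsClosed ((N : Set F))
  · haveI : CompleteSpace N := hN.completeSpace_coe
    rw [projTo_of_isClosed hN]
    calc ‖(orthogonalProjection N x : F)‖ ≤ ‖orthogonalProjection N‖ * ‖x‖ :=
          (orthogonalProjection N).le_opNorm x
    _ ≤ 1 * ‖x‖ := by gcongr; exact orthogonalProjection_norm_le N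
    _ = ‖x‖ := one_mul _
  · simp only [projTo]
    rw [dif_neg hN, norm_zero]
    exact norm_nonneg x

lemma sub_projTo_mem_orthogonal {N : Submodule ℂ F} (hN : IsClosed ((N : Set F))) (x : F) :
    x - projTo N x ∈ Nᗮ := by
  haveI : CompleteSpace N := hN.completeSpace_coe
  rw [projTo_of_isClosed hN]
  exact sub_starProjection_mem_orthogonal x

lemma continuous_projTo {N : Submodule ℂ F} (hN : IsClosed ((N : Set F))) :
    Continuous (fun x : F => projTo N x) := by
  haveI : CompleteSpace N := hN.completeSpace_coe
  have heq : (fun x : F => projTo N x) = fun x => ((orthogonalProjection N x : N) : F) :=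
    funext fun x => projTo_of_isClosed hN x
  rw [heq]
  exact continuous_subtype_val.comp (orthogonalProjection N).continuous

end ProjTo

section Aux2'

set_option linter.unusedSectionVars false

open Filter

variable (K : Type) [NormedAddCommGroup K] [InnerProductSpace ℂ K] [CompleteSpace K]

lemma constL_apply (x : K) :
    ((constL K x : H2 K) : L2 K) = expVec K 0 x := rfl

/-- Membership in `hardyIn`. -/
lemma mem_hardyIn {N : Submodule ℂ K} {u : H2 K} :
    u ∈ hardyIn K N ↔ ∀ᵐ z ∂μT, ((u : L2 K) : 𝕋 → K) z ∈ N := Iff.rfl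

/-- Pointwise characterization: a Hardy-space function with values in `N`, orthogonal to
all `zᵏ·w` for `k ≥ 1`, `w ∈ N`, is a constant with value in `N`. -/
lemma eq_const_of_orth {N : Submodule ℂ K} (hN : IsClosed (N : Set K))
    [SecondCountableTopology K] (u : H2 K)
    (hval : ∀ᵐ t ∂μT, ((u : L2 K) : 𝕋 → K) t ∈ N)
    (horth : ∀ (k : ℤ), 1 ≤ k → ∀ w ∈ N, (inner ℂ (expVec K k w) (u : L2 K) : ℂ) = 0) :
    u ∈ Submodule.map (constL K) N := by
  haveI : CompleteSpace N := hN.completeSpace_coe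
  set a : K := coeff0 K (u : L2 K) with ha_def
  have ha : a ∈ N := coeff0_mem K hN hval
  have hu2 : ∀ (n : ℤ), n < 0 → ∀ x : K, (inner ℂ (expVec K n x) (u : L2 K) : ℂ) = 0 := by
    have h2 := u.2
    simp only [Hardy, Submodule.mem_iInf, LinearMap.mem_ker, ContinuousLinearMap.coe_coe, innerSL_apply_apply] at h2
    exact h2
  have key : (u : L2 K) = expVec K 0 a := by
    rw [← sub_eq_zero]
    apply eq_zero_of_inner_expVec
    intro n x
    rw [inner_sub_right, inner_expVec_expVec]
    rcases lt_trichotomy n 0 with hn | hn | hn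
    · rw [hu2 n hn x, if_neg (by omega), sub_zero]
    · subst hn
      rw [if_pos rfl, inner_expVec_zero, ← ha_def, sub_self]
    · rw [if_neg (by omega), sub_zero]
      have hx : x = (orthogonalProjection N x : K) + (x - (orthogonalProjection N x : K)) := by
        abel
      rw [hx, expVec_add, inner_add_left]
      rw [horth n (by omega) _ (orthogonalProjection N x).2,
        inner_expVec_eq_zero_of_orth K (y := x - (orthogonalProjection N x : K))
          (by exact sub_starProjection_mem_orthogonal (K := N) x) n hval,
        add_zero]
  exact ⟨a, ha, Subtype.ext key.symm⟩

lemma inner_constL_left (w : K) (G : H2 K) :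
    (inner ℂ (constL K w) G : ℂ) = inner ℂ w (coeff0 K (G : L2 K)) := by
  rw [Submodule.coe_inner, constL_apply, inner_expVec_zero]

lemma isClosed_map_constL {N : Submodule ℂ K} (hN : IsClosed (N : Set K)) :
    IsClosed ((Submodule.map (constL K) N : Set (H2 K))) := by
  have hiso : Isometry (fun x : K => (constL K x : H2 K)) := by
    refine Isometry.of_dist_eq fun x y => ?_
    rw [dist_eq_norm, dist_eq_norm, ← map_sub]
    show ‖((constL K (x - y) : H2 K) : L2 K)‖ = _
    rw [constL_apply, norm_expVec]
  have : (Submodule.map (constL K) N : Set (H2 K))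
      = (fun x : K => (constL K x : H2 K)) '' (N : Set K) := by
    rw [Submodule.map_coe]
  rw [this]
  exact ((isComplete_image_iff hiso.isUniformInducing).2 hN.isComplete).isClosed

end Aux2'


section Aux3

set_option linter.unusedSectionVars false

open Filter TopologicalSpace

section ProjGeneric

variable {F : Type*} [NormedAddCommGroup F] [InnerProductSpace ℂ F] [CompleteSpace F]

lemma inner_projTo_self (N : Submodule ℂ F) (x : F) :
    (inner ℂ (projTo N x) x : ℂ) = inner ℂ (projTo N x) (projTo N x) := by
  by_cases hN : IsClosed ((N : Set F))
  · haveI : CompleteSpace N := hN.completeSpace_coe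
    have h0 : (inner ℂ (projTo N x) (x - projTo N x) : ℂ) = 0 := by
      have hmem : x - projTo N x ∈ Nᗮ := by
        rw [projTo_of_isClosed hN]
        exact sub_starProjection_mem_orthogonal x
      exact (Submodule.mem_orthogonal N _).1 hmem _ (projTo_mem N x)
    rw [inner_sub_right, sub_eq_zero] at h0
    exact h0
  · simp only [projTo]
    rw [dif_neg hN]
    simp

end ProjGeneric

variable (K : Type) [NormedAddCommGroup K] [InnerProductSpace ℂ K] [CompleteSpace K]

lemma projTo_map_constL {N : Submodule ℂ K} (hN : IsClosed ((N : Set K))) (F : H2 K) :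
    projTo (Submodule.map (constL K) N) F
      = constL K (projTo N (coeff0 K (F : L2 K))) := by
  haveI : CompleteSpace N := hN.completeSpace_coe
  have hC : IsClosed ((Submodule.map (constL K) N : Set (H2 K))) := isClosed_map_constL K hN
  haveI : CompleteSpace (Submodule.map (constL K) N) := hC.completeSpace_coe
  rw [projTo_of_isClosed hC]
  set a : K := coeff0 K (F : L2 K) with ha_def
  apply eq_starProjection_of_mem_of_inner_eq_zero
  · exact Submodule.mem_map_of_mem (projTo_mem N a)
  · rintro w ⟨y, hy, rfl⟩
    have h1 : (inner ℂ (constL K y) (F - constL K (projTo N a)) : ℂ) = 0 := by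
      rw [inner_sub_right, inner_constL_left]
      have h2 : (inner ℂ (constL K y) (constL K (projTo N a)) : ℂ) = inner ℂ y (projTo N a) := by
        rw [Submodule.coe_inner, constL_apply, constL_apply, inner_expVec_expVec, if_pos rfl]
      rw [h2, ← ha_def, ← inner_sub_right]
      exact (Submodule.mem_orthogonal N _).1 (sub_projTo_mem_orthogonal hN a) y hy
    rw [← inner_conj_symm, h1, map_zero]

lemma isMeasRange_map_constL (J : 𝕋 → Submodule ℂ K) (hJ : IsMeasRange J) :
    IsMeasRange (fun t => Submodule.map (constL K) (J t)) := by
  refine ⟨fun t => isClosed_map_constL K (hJ.1 t), fun F G => ?_⟩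
  have heq : (fun t => (inner ℂ (projTo (Submodule.map (constL K) (J t)) F) G : ℂ))
      = fun t => (inner ℂ (projTo (J t) (coeff0 K (F : L2 K))) (coeff0 K (G : L2 K)) : ℂ) := by
    funext t
    rw [projTo_map_constL K (hJ.1 t), inner_constL_left]
  rw [heq]
  exact hJ.2 _ _

variable [SecondCountableTopology K]

lemma stronglyMeasurable_projTo (J : 𝕋 → Submodule ℂ K) (hJ : IsMeasRange J) (x : K) :
    StronglyMeasurable (fun t => projTo (J t) x) := by
  borelize K
  rw [stronglyMeasurable_iff_measurable_separable]
  refine ⟨?_, TopologicalSpace.IsSeparable.of_separableSpace _⟩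
  have hdist : ∀ y : K, Measurable (fun t => dist (projTo (J t) x) y) := by
    intro y
    have heq : (fun t => dist (projTo (J t) x) y)
        = fun t => Real.sqrt (RCLike.re (inner ℂ (projTo (J t) x) x : ℂ)
            - 2 * RCLike.re (inner ℂ (projTo (J t) x) y : ℂ) + ‖y‖ ^ 2) := by
      funext t
      rw [dist_eq_norm, ← Real.sqrt_sq (norm_nonneg (projTo (J t) x - y)),
        norm_sub_sq (𝕜 := ℂ), ← inner_self_eq_norm_sq (𝕜 := ℂ), ← inner_projTo_self]
    rw [heq]
    exact (Real.continuous_sqrt.measurable).comp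
      ((((hJ.2 x x).re).sub ((measurable_const.mul ((hJ.2 x y).re)))).add measurable_const)
  apply measurable_of_isClosed
  intro C hC
  rcases Set.eq_empty_or_nonempty C with hCe | hCne
  · subst hCe
    simp
  · haveI : SeparableSpace (↥C) := by infer_instance
    obtain ⟨s, hsc, hsd⟩ := TopologicalSpace.exists_countable_dense (↥C)
    set c : Set K := Subtype.val '' s with hc_def
    have hcC : c ⊆ C := by
      rintro _ ⟨z, _, rfl⟩
      exact z.2
    have hCc : closure c = C := by
      apply Set.Subset.antisymm
      · rw [← hC.closure_eq]
        exact closure_mono hcC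
      · intro z hz
        have h1 : (⟨z, hz⟩ : ↥C) ∈ closure s := hsd _
        have h2 : z ∈ Subtype.val '' (closure s) := ⟨⟨z, hz⟩, h1, rfl⟩
        exact (image_closure_subset_closure_image continuous_subtype_val) h2
    have hcne : c.Nonempty := by
      by_contra hne
      rw [Set.not_nonempty_iff_eq_empty] at hne
      rw [hne, closure_empty] at hCc
      exact hCne.ne_empty hCc.symm
    obtain ⟨d, hd⟩ := (hsc.image _).exists_eq_range hcne
    have hd' : c = Set.range d := hc_def.trans hd
    have hpre : (fun t => projTo (J t) x) ⁻¹' C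
        = (fun t => ⨅ n : ℕ, edist (projTo (J t) x) (d n)) ⁻¹' {0} := by
      ext t
      simp only [Set.mem_preimage, Set.mem_singleton_iff]
      rw [← hCc, EMetric.mem_closure_iff_infEdist_zero, hd']
      simp only [Metric.infEDist, iInf_range]
    rw [hpre]
    refine Measurable.iInf (fun n => ?_) (measurableSet_singleton 0)
    have : (fun t => edist (projTo (J t) x) (d n))
        = fun t => ENNReal.ofReal (dist (projTo (J t) x) (d n)) := by
      funext t
      rw [edist_dist]
    rw [this]
    exact ENNReal.measurable_ofReal.comp (hdist (d n))

end Aux3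


section Aux4

set_option linter.unusedSectionVars false

open Filter TopologicalSpace

section MulFAdj

variable {E : Type*} [NormedAddCommGroup E] [InnerProductSpace ℂ E]

lemma inner_mulF (n : ℤ) (u v : L2 E) :
    (inner ℂ (mulF n u) v : ℂ) = inner ℂ u (mulF (-n) v) := by
  rw [MeasureTheory.L2.inner_def, MeasureTheory.L2.inner_def]
  refine integral_congr_ae ?_
  filter_upwards [coeFn_mulF n u, coeFn_mulF (-n) v] with t h1 h2
  rw [h1, h2, inner_smul_left, inner_smul_right, fourier_neg]

lemma inner_mulF' (n : ℤ) (u v : L2 E) :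
    (inner ℂ u (mulF n v) : ℂ) = inner ℂ (mulF (-n) u) v := by
  rw [inner_mulF, neg_neg]

end MulFAdj

variable (K : Type) [NormedAddCommGroup K] [InnerProductSpace ℂ K] [CompleteSpace K]

lemma S_coe (u : H2 K) : ((S K u : H2 K) : L2 K) = mulF 1 (u : L2 K) := rfl

lemma coeFn_Shat (g : L2 (H2 K)) :
    (Shat K g : 𝕋 → H2 K) =ᵐ[μT] fun t => S K ((g : 𝕋 → H2 K) t) :=
  ContinuousLinearMap.coeFn_compLpL _ _

lemma Shat_mulF (n : ℤ) (g : L2 (H2 K)) : Shat K (mulF n g) = mulF n (Shat K g) := by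
  apply Lp.ext
  filter_upwards [coeFn_Shat K (mulF n g), coeFn_mulF n g, coeFn_mulF n (Shat K g),
    coeFn_Shat K g] with t h1 h2 h3 h4
  rw [h1, h2, h3, h4, _root_.map_smul]

lemma mem_W_iff {W : Submodule ℂ (L2 (H2 K))} {J : 𝕋 → Submodule ℂ K}
    (hW : (W : Set (L2 (H2 K))) = fullHardySet K J) {f : L2 (H2 K)} :
    f ∈ W ↔ ∀ᵐ t ∂μT, (f : 𝕋 → H2 K) t ∈ hardyIn K (J t) := by
  rw [← SetLike.mem_coe, hW]
  exact Iff.rfl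

lemma mulF_mem_W {W : Submodule ℂ (L2 (H2 K))} {J : 𝕋 → Submodule ℂ K}
    (hW : (W : Set (L2 (H2 K))) = fullHardySet K J) (n : ℤ) {g : L2 (H2 K)}
    (hg : g ∈ W) : mulF n g ∈ W := by
  rw [mem_W_iff K hW] at hg ⊢
  filter_upwards [hg, coeFn_mulF n g] with t h1 h2
  rw [h2]
  exact Submodule.smul_mem _ _ h1

lemma inner_S_constL (v : H2 K) (a : K) : (inner ℂ (S K v) (constL K a) : ℂ) = 0 := by
  rw [Submodule.coe_inner, S_coe, constL_apply, ← inner_conj_symm, inner_expVec_mulF]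
  have h2 := v.2
  simp only [Hardy, Submodule.mem_iInf, LinearMap.mem_ker, ContinuousLinearMap.coe_coe, innerSL_apply_apply] at h2
  rw [show (0 : ℤ) - 1 = -1 by norm_num, h2 (-1) (by norm_num) a, map_zero]

/-- Total family of exponentials in the scalar `L²`. -/
lemma eq_zero_of_inner_fourier (ψ : Lp ℂ 2 μT)
    (h : ∀ n : ℤ, (inner ℂ (fourierLp 2 n : Lp ℂ 2 μT) ψ : ℂ) = 0) : ψ = 0 := by
  have hr : (fourierBasis (T := 1)).repr ψ = 0 := by
    apply lp.ext
    funext n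
    rw [HilbertBasis.repr_apply_apply]
    have hb : ((fourierBasis (T := 1)) n : Lp ℂ 2 μT) = fourierLp 2 n := by
      rw [coe_fourierBasis]
    rw [hb, h n]
    rfl
  exact ((fourierBasis (T := 1)).repr.map_eq_zero_iff).1 hr

variable [SecondCountableTopology K]

lemma step1 (W : Submodule ℂ (L2 (H2 K))) (J : 𝕋 → Submodule ℂ K) (hJ : IsMeasRange J)
    (hW : (W : Set (L2 (H2 K))) = fullHardySet K J)
    {f : L2 (H2 K)} (hf : f ∈ Submodule.orthogonal (𝕜 := ℂ) (E := L2 (H2 K)) (Submodule.map (Shat K : L2 (H2 K) →ₗ[ℂ] L2 (H2 K)) W)) (m : ℕ) (x : K) :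
    ∀ᵐ t ∂μT, (inner ℂ (expVec K ((m : ℤ) + 1) (projTo (J t) x))
      (((f : 𝕋 → H2 K) t : H2 K) : L2 K) : ℂ) = 0 := by
  have hp := stronglyMeasurable_projTo K J hJ x
  have hmemH : ∀ y : K, expVec K (m : ℤ) y ∈ Hardy K :=
    fun y => expVec_mem_hardy K _ (Int.natCast_nonneg m) y
  set gfun : 𝕋 → H2 K := fun t => ⟨expVec K (m : ℤ) (projTo (J t) x), hmemH _⟩ with hgfun
  have hgsm : StronglyMeasurable gfun := by
    have hcont : Continuous (fun y : K => (⟨expVec K (m : ℤ) y, hmemH y⟩ : H2 K)) :=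
      Continuous.subtype_mk (continuous_expVec K _) _
    exact hcont.comp_stronglyMeasurable hp
  have hgbd : MemLp gfun 2 μT := by
    refine MemLp.of_bound hgsm.aestronglyMeasurable ‖x‖
      (Filter.Eventually.of_forall fun t => ?_)
    show ‖expVec K (m : ℤ) (projTo (J t) x)‖ ≤ ‖x‖
    rw [norm_expVec]
    exact norm_projTo_le _ _
  set g : L2 (H2 K) := hgbd.toLp gfun with hgdef
  have hgW : g ∈ W := by
    rw [mem_W_iff K hW]
    filter_upwards [hgbd.coeFn_toLp] with t ht
    rw [ht]
    show ∀ᵐ z ∂μT, ((expVec K (m : ℤ) (projTo (J t) x)) : 𝕋 → K) z ∈ J t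
    filter_upwards [coeFn_expVec K (m : ℤ) (projTo (J t) x)] with z hz
    rw [hz]
    exact Submodule.smul_mem _ _ (projTo_mem _ _)
  have horthn : ∀ n : ℤ, (inner ℂ (Shat K (mulF n g)) f : ℂ) = 0 := fun n =>
    (Submodule.mem_orthogonal _ f).1 hf _
      (Submodule.mem_map_of_mem (mulF_mem_W K hW n hgW))
  set ψfun : 𝕋 → ℂ := fun t => (inner ℂ (S K ((g : 𝕋 → H2 K) t)) ((f : 𝕋 → H2 K) t) : ℂ)
    with hψfun
  have hψm : AEStronglyMeasurable ψfun μT :=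
    AEStronglyMeasurable.inner
      ((S K).continuous.comp_aestronglyMeasurable (Lp.aestronglyMeasurable g))
      (Lp.aestronglyMeasurable f)
  have hψ2 : MemLp ψfun 2 μT := by
    refine MemLp.of_le ((Lp.memLp f).const_smul (‖S K‖ * ‖x‖)) hψm ?_
    filter_upwards [hgbd.coeFn_toLp] with t ht
    simp only [Pi.smul_apply]
    rw [norm_smul]
    calc ‖ψfun t‖ ≤ ‖S K ((g : 𝕋 → H2 K) t)‖ * ‖(f : 𝕋 → H2 K) t‖ :=
          by exact norm_inner_le_norm (𝕜 := ℂ) (S K ((g : 𝕋 → H2 K) t)) ((f : 𝕋 → H2 K) t)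
    _ ≤ (‖S K‖ * ‖x‖) * ‖(f : 𝕋 → H2 K) t‖ := by
        have h1 : ‖S K ((g : 𝕋 → H2 K) t)‖ ≤ ‖S K‖ * ‖x‖ := by
          calc ‖S K ((g : 𝕋 → H2 K) t)‖ ≤ ‖S K‖ * ‖(g : 𝕋 → H2 K) t‖ :=
                (S K).le_opNorm _
          _ ≤ ‖S K‖ * ‖x‖ := by
              gcongr
              rw [ht]
              show ‖expVec K (m : ℤ) (projTo (J t) x)‖ ≤ ‖x‖
              rw [norm_expVec]
              exact norm_projTo_le _ _
        gcongr
    _ ≤ ‖‖S K‖ * ‖x‖‖ * ‖(f : 𝕋 → H2 K) t‖ := by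
        gcongr
        exact le_abs_self _
  set ψ : Lp ℂ 2 μT := hψ2.toLp _ with hψdef
  have hψ0 : ψ = 0 := by
    apply eq_zero_of_inner_fourier
    intro n
    have heq : (inner ℂ (fourierLp 2 n : Lp ℂ 2 μT) ψ : ℂ) = inner ℂ (Shat K (mulF n g)) f := by
      rw [MeasureTheory.L2.inner_def, MeasureTheory.L2.inner_def]
      refine integral_congr_ae ?_
      filter_upwards [hψ2.coeFn_toLp, coeFn_fourierLp 2 n, coeFn_Shat K (mulF n g),
        coeFn_mulF n g] with t h1 h2 h3 h4
      rw [h1, h2, h3, h4, _root_.map_smul, RCLike.inner_apply, mul_comm]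
      exact (inner_smul_left (𝕜 := ℂ) (S K ((g : 𝕋 → H2 K) t)) ((f : 𝕋 → H2 K) t) (fourier n t)).symm
    rw [heq, horthn n]
  have hae0 : ψfun =ᵐ[μT] 0 := by
    have h1 := hψ2.coeFn_toLp
    rw [← hψdef, hψ0] at h1
    filter_upwards [h1.symm, Lp.coeFn_zero ℂ 2 μT] with t e1 e2
    rw [e1, e2]
  filter_upwards [hae0, hgbd.coeFn_toLp] with t h1 h2
  have h2' : (g : 𝕋 → H2 K) t = gfun t := h2
  have h3 : (inner ℂ (S K ((g : 𝕋 → H2 K) t)) ((f : 𝕋 → H2 K) t) : ℂ) = 0 := h1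
  rw [h2'] at h3
  have h4 : (inner ℂ ((S K (gfun t) : H2 K) : L2 K) (((f : 𝕋 → H2 K) t : H2 K) : L2 K) : ℂ)
      = 0 := by
    rw [← Submodule.coe_inner]
    exact h3
  rw [S_coe] at h4
  have h5 : ((gfun t : H2 K) : L2 K) = expVec K (m : ℤ) (projTo (J t) x) := rfl
  rw [h5, mulF_expVec] at h4
  exact h4

end Aux4

section Statements

variable (K : Type) [NormedAddCommGroup K] [InnerProductSpace ℂ K] [CompleteSpace K]
  [SecondCountableTopology K]

theorem statement19 (W : Submodule ℂ (L2 (H2 K))) (J : 𝕋 → Submodule ℂ K)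
    (hJ : IsMeasRange J) (hW : (W : Set (L2 (H2 K))) = fullHardySet K J) :
    Reducing (mulF 1) (W ⊓ Submodule.orthogonal (𝕜 := ℂ) (E := L2 (H2 K))
      (Submodule.map (Shat K : L2 (H2 K) →ₗ[ℂ] L2 (H2 K)) W)) ∧
    IsMeasRange (fun t => Submodule.map (constL K) (J t)) ∧
    ((↑(W ⊓ Submodule.orthogonal (𝕜 := ℂ) (E := L2 (H2 K))
        (Submodule.map (Shat K : L2 (H2 K) →ₗ[ℂ] L2 (H2 K)) W)) : Set (L2 (H2 K))) =
      rangeSet (fun t => Submodule.map (constL K) (J t))) := by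
  have hXorth_inv : ∀ (n : ℤ), ∀ v ∈ Submodule.orthogonal (𝕜 := ℂ) (E := L2 (H2 K)) (Submodule.map (Shat K : L2 (H2 K) →ₗ[ℂ] L2 (H2 K)) W),
      mulF n v ∈ Submodule.orthogonal (𝕜 := ℂ) (E := L2 (H2 K)) (Submodule.map (Shat K : L2 (H2 K) →ₗ[ℂ] L2 (H2 K)) W) := by
    intro n v hv
    rw [Submodule.mem_orthogonal] at hv ⊢
    rintro u ⟨gg, hgg, rfl⟩
    rw [show ((Shat K : L2 (H2 K) →ₗ[ℂ] L2 (H2 K)) gg) = Shat K gg from rfl, inner_mulF' n (Shat K gg) v, ← Shat_mulF]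
    exact hv _ (Submodule.mem_map_of_mem (mulF_mem_W K hW (-n) hgg))
  have hMinv : ∀ (n : ℤ), ∀ f ∈ W ⊓ Submodule.orthogonal (𝕜 := ℂ) (E := L2 (H2 K)) (Submodule.map (Shat K : L2 (H2 K) →ₗ[ℂ] L2 (H2 K)) W),
      mulF n f ∈ W ⊓ Submodule.orthogonal (𝕜 := ℂ) (E := L2 (H2 K)) (Submodule.map (Shat K : L2 (H2 K) →ₗ[ℂ] L2 (H2 K)) W) := by
    intro n f hf
    rw [Submodule.mem_inf] at hf ⊢
    exact ⟨mulF_mem_W K hW n hf.1, hXorth_inv n f hf.2⟩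
  refine ⟨⟨fun f hf => hMinv 1 f hf, ?_⟩, isMeasRange_map_constL K J hJ, ?_⟩
  · intro f hf
    rw [Submodule.mem_orthogonal] at hf ⊢
    intro u hu
    rw [inner_mulF' 1 u f]
    exact hf _ (hMinv (-1) u hu)
  · ext f
    constructor
    · rintro ⟨hfW, hfX⟩
      have hvals : ∀ᵐ t ∂μT, (f : 𝕋 → H2 K) t ∈ hardyIn K (J t) := (mem_W_iff K hW).1 hfW
      have hstep : ∀ᵐ t ∂μT, ∀ mk : ℕ × ℕ,
          (inner ℂ (expVec K ((mk.1 : ℤ) + 1)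
              (projTo (J t) (TopologicalSpace.denseSeq K mk.2)))
            (((f : 𝕋 → H2 K) t : H2 K) : L2 K) : ℂ) = 0 :=
        ae_all_iff.2 fun mk => step1 K W J hJ hW hfX mk.1 (TopologicalSpace.denseSeq K mk.2)
      show ∀ᵐ t ∂μT, (f : 𝕋 → H2 K) t ∈ Submodule.map (constL K) (J t)
      filter_upwards [hvals, hstep] with t h1 h2
      have hcl := hJ.1 t
      refine eq_const_of_orth K hcl _ h1 ?_
      intro k hk w hw
      have hall : ∀ y : K,
          (inner ℂ (expVec K (((k - 1).toNat : ℤ) + 1) (projTo (J t) y))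
            (((f : 𝕋 → H2 K) t : H2 K) : L2 K) : ℂ) = 0 := by
        have hQ : (fun y : K => (inner ℂ (expVec K (((k - 1).toNat : ℤ) + 1)
            (projTo (J t) y)) (((f : 𝕋 → H2 K) t : H2 K) : L2 K) : ℂ)) = fun _ => 0 := by
          refine DenseRange.equalizer (TopologicalSpace.denseRange_denseSeq K) ?_
            continuous_const (funext fun kk => h2 ((k - 1).toNat, kk))
          exact Continuous.inner
            ((continuous_expVec K _).comp (continuous_projTo hcl)) continuous_const
        exact fun y => congrFun hQ y
      have h5 := hall w
      rw [projTo_eq_self hcl hw] at h5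
      have hcast : (((k - 1).toNat : ℤ) + 1) = k := by omega
      rwa [hcast] at h5
    · intro hx
      have hx' : ∀ᵐ t ∂μT, (f : 𝕋 → H2 K) t ∈ Submodule.map (constL K) (J t) := hx
      refine ⟨?_, ?_⟩
      · show f ∈ W
        rw [mem_W_iff K hW]
        filter_upwards [hx'] with t ht
        obtain ⟨a, ha, hfa⟩ := ht
        rw [← hfa, mem_hardyIn, constL_apply]
        filter_upwards [coeFn_expVec K 0 a] with z hz
        rw [hz]
        exact Submodule.smul_mem _ _ ha
      · show f ∈ Submodule.orthogonal (𝕜 := ℂ) (E := L2 (H2 K)) (Submodule.map (Shat K : L2 (H2 K) →ₗ[ℂ] L2 (H2 K)) W)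
        rw [Submodule.mem_orthogonal]
        rintro u ⟨gg, hggW, rfl⟩
        rw [MeasureTheory.L2.inner_def]
        apply integral_eq_zero_of_ae
        filter_upwards [hx', coeFn_Shat K gg] with t ht h3
        obtain ⟨a, ha, hfa⟩ := ht
        rw [Pi.zero_apply, show ((Shat K : L2 (H2 K) →ₗ[ℂ] L2 (H2 K)) gg) = Shat K gg from rfl, h3, ← hfa]
        exact inner_S_constL K _ a

end Statements

end ShiftPaper
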